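/- Let Y ⊆ ℝ^{d'} be a nonempty closed convex set, γ > 0, λ > 0, μ_x > 0, x₀ ∈ ℝ^d, y₀ ∈ Y, and let f : ℝ^d × Y → ℝ be differentiable in x. Define f_γ(x,y) = f(x,y) + (γ/2)‖x − x₀‖² and assume: (a) for every y ∈ Y, x ↦ f_γ(x,y) is λ-strongly convex and attains its minimum over ℝ^d; (b) f satisfies the x-side μ_x-PL condition; (c) sup_{y∈Y} f(x₀, y) is finite. Set ε̂ = Gap_γ(x₀, y₀) := sup_{y∈Y} f_γ(x₀, y) − min_{x∈ℝ^d} f_γ(x, y₀). Then the duality gap of (x₀, y₀) for the original problem satisfies Gap(x₀, y₀) := sup_{y∈Y} f(x₀, y) − inf_{x∈ℝ^d} f(x, y₀) ≤ (1 + 4γ/λ + 4γ²/(λ μ_x))·ε̂. In particular, with γ = 2ρ and λ = ρ (the setting of the proximal epoch method for ρ-weakly convex f), Gap(x₀, y₀) ≤ 9ε̂ + (16ρ/μ_x)·ε̂. -/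

import Mathlib

open InnerProductSpace

/-- Gradient of the quadratic regularizer. -/
lemma quad_hasGradientAt {d : ℕ} (γ : ℝ) (x₀ x : EuclideanSpace ℝ (Fin d)) :
    HasGradientAt (fun x' : EuclideanSpace ℝ (Fin d) => γ / 2 * ‖x' - x₀‖ ^ 2)
      (γ • (x - x₀)) x := by
  have h1 : HasFDerivAt (fun x' : EuclideanSpace ℝ (Fin d) => x' - x₀)
      (ContinuousLinearMap.id ℝ _) x := (hasFDerivAt_id x).sub_const x₀
  have h2 := h1.norm_sq
  have h3 := h2.const_mul (γ / 2)
  rw [hasGradientAt_iff_hasFDerivAt]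
  refine h3.congr_fderiv ?_
  ext v
  simp [toDual_apply_apply, real_inner_smul_left, real_inner_smul_right]
  ring

set_option maxHeartbeats 800000 in
/-- If `f_γ(·,y)` is λ-strongly convex and attains its minimum, `f` satisfies the x-side
`μx`-PL condition, and `sup_{y∈Y} f(x₀,y)` is finite, then the duality gap of `(x₀,y₀)` for the
original problem is bounded by `(1 + 4γ/λ + 4γ²/(λμx))` times the regularized duality gap;
in particular, with `γ = 2ρ` and `λ = ρ`, `Gap(x₀,y₀) ≤ 9ε̂ + (16ρ/μx)ε̂`. -/
theorem stmt12 {d d' : ℕ}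
    (Y : Set (EuclideanSpace ℝ (Fin d')))
    (hYne : Y.Nonempty) (hYcl : IsClosed Y) (hYcv : Convex ℝ Y)
    (f : EuclideanSpace ℝ (Fin d) → EuclideanSpace ℝ (Fin d') → ℝ)
    (γ lam μx : ℝ) (hγ : 0 < γ) (hlam : 0 < lam) (hμx : 0 < μx)
    (x₀ : EuclideanSpace ℝ (Fin d)) (y₀ : EuclideanSpace ℝ (Fin d')) (hy₀ : y₀ ∈ Y)
    (hdiff : ∀ y ∈ Y, Differentiable ℝ fun x : EuclideanSpace ℝ (Fin d) => f x y)
    (hsc : ∀ y ∈ Y, ConvexOn ℝ Set.univ fun x : EuclideanSpace ℝ (Fin d) =>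
      (f x y + γ / 2 * ‖x - x₀‖ ^ 2) - lam / 2 * ‖x‖ ^ 2)
    (hattain : ∀ y ∈ Y, ∃ xm : EuclideanSpace ℝ (Fin d), ∀ x,
      f xm y + γ / 2 * ‖xm - x₀‖ ^ 2 ≤ f x y + γ / 2 * ‖x - x₀‖ ^ 2)
    (hxPL : ∀ y ∈ Y, ∃ my : ℝ, IsGLB (Set.range fun x => f x y) my ∧
      ∀ x, ‖gradient (fun x' => f x' y) x‖ ^ 2 ≥ 2 * μx * (f x y - my))
    (S mγ m₀ : ℝ)
    (hS : IsLUB ((fun y => f x₀ y) '' Y) S)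
    (hmγ : IsLeast (Set.range fun x => f x y₀ + γ / 2 * ‖x - x₀‖ ^ 2) mγ)
    (hm₀ : IsGLB (Set.range fun x => f x y₀) m₀) :
    S - m₀ ≤ (1 + 4 * γ / lam + 4 * γ ^ 2 / (lam * μx)) * (S - mγ) ∧
    (∀ ρ : ℝ, 0 < ρ → γ = 2 * ρ → lam = ρ →
      S - m₀ ≤ 9 * (S - mγ) + 16 * ρ / μx * (S - mγ)) := by
  obtain ⟨xs, hxs⟩ := hattain y₀ hy₀
  -- basic facts
  have hP : f x₀ y₀ ≤ S := hS.1 ⟨y₀, hy₀, rfl⟩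
  have hmγle : mγ ≤ f x₀ y₀ := by
    have := hmγ.2 (Set.mem_range_self x₀)
    simpa using this
  have hε : 0 ≤ S - mγ := by linarith
  have hgxs : f xs y₀ + γ / 2 * ‖xs - x₀‖ ^ 2 = mγ := by
    refine le_antisymm ?_ (hmγ.2 (Set.mem_range_self xs))
    obtain ⟨x'', hx''⟩ := hmγ.1
    rw [← hx'']
    exact hxs x''
  -- strong convexity: lam/4 * ‖xs - x₀‖^2 ≤ S - mγ
  set D : ℝ := ‖xs - x₀‖ ^ 2 with hD
  have hD0 : 0 ≤ D := sq_nonneg _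
  have hDle : lam / 4 * D ≤ S - mγ := by
    have hcv := (hsc y₀ hy₀).2 (Set.mem_univ x₀) (Set.mem_univ xs)
      (by norm_num : (0:ℝ) ≤ 1/2) (by norm_num : (0:ℝ) ≤ 1/2) (by norm_num)
    set mid := (1/2 : ℝ) • x₀ + (1/2 : ℝ) • xs with hmid
    have hgmid : mγ ≤ f mid y₀ + γ / 2 * ‖mid - x₀‖ ^ 2 := hmγ.2 (Set.mem_range_self mid)
    have hmid' : mid = (1/2 : ℝ) • (x₀ + xs) := by rw [hmid, smul_add]
    have hnm : ‖mid‖ ^ 2 = 1/4 * ‖x₀ + xs‖ ^ 2 := by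
      rw [hmid', norm_smul]
      norm_num
      ring
    have h2 : ‖x₀ + xs‖ ^ 2 = ‖x₀‖ ^ 2 + 2 * ⟪x₀, xs⟫_ℝ + ‖xs‖ ^ 2 := norm_add_sq_real x₀ xs
    have h3 : ‖x₀ - xs‖ ^ 2 = ‖x₀‖ ^ 2 - 2 * ⟪x₀, xs⟫_ℝ + ‖xs‖ ^ 2 := norm_sub_sq_real x₀ xs
    have h4 : D = ‖x₀ - xs‖ ^ 2 := by rw [hD, norm_sub_rev]
    have h5 : ‖x₀ - x₀‖ ^ 2 = 0 := by simp
    -- hcv : f mid y₀ + γ/2‖mid-x₀‖² - lam/2‖mid‖² ≤ 1/2 (f x₀ y₀ + γ/2‖x₀-x₀‖² - lam/2‖x₀‖²) + ...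
    simp only [smul_eq_mul] at hcv
    nlinarith [hcv, hgmid, hgxs, hP]
  -- gradient at xs
  have hdy := hdiff y₀ hy₀
  have hquad := quad_hasGradientAt γ x₀ xs
  have hFgrad : HasGradientAt (fun x => f x y₀) (gradient (fun x => f x y₀) xs) xs :=
    (hdy xs).hasGradientAt
  have hsum : HasFDerivAt (fun x => f x y₀ + γ / 2 * ‖x - x₀‖ ^ 2)
      (toDual ℝ _ (gradient (fun x => f x y₀) xs) + toDual ℝ _ (γ • (xs - x₀))) xs :=
    HasFDerivAt.add (hasGradientAt_iff_hasFDerivAt.1 hFgrad)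
      (hasGradientAt_iff_hasFDerivAt.1 hquad)
  have hlocmin : IsLocalMin (fun x => f x y₀ + γ / 2 * ‖x - x₀‖ ^ 2) xs :=
    (isMinOn_iff.2 fun x _ => hxs x).isLocalMin (Filter.univ_mem)
  have hzero := hlocmin.hasFDerivAt_eq_zero hsum
  have hgradeq : gradient (fun x => f x y₀) xs = -(γ • (xs - x₀)) := by
    have : toDual ℝ (EuclideanSpace ℝ (Fin d))
        (gradient (fun x => f x y₀) xs + γ • (xs - x₀)) = 0 := by
      rw [map_add]; exact hzero
    have h0 : gradient (fun x => f x y₀) xs + γ • (xs - x₀) = 0 :=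
      (toDual ℝ (EuclideanSpace ℝ (Fin d))).map_eq_zero_iff.1 this
    exact eq_neg_of_add_eq_zero_left h0
  have hgradnorm : ‖gradient (fun x => f x y₀) xs‖ ^ 2 = γ ^ 2 * D := by
    rw [hgradeq, norm_neg, norm_smul, Real.norm_eq_abs, abs_of_pos hγ, mul_pow, hD]
  -- PL inequality
  obtain ⟨my, hmy, hPL⟩ := hxPL y₀ hy₀
  have hmyeq : my = m₀ := hmy.unique hm₀
  have hPLxs : 2 * μx * (f xs y₀ - m₀) ≤ γ ^ 2 * D := by
    have := hPL xs
    rw [hgradnorm, hmyeq] at this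
    linarith
  -- combine
  have hmain : S - m₀ ≤ (1 + 4 * γ / lam + 4 * γ ^ 2 / (lam * μx)) * (S - mγ) := by
    have hco : (1 + 4 * γ / lam + 4 * γ ^ 2 / (lam * μx)) * (S - mγ)
        = (2 * μx * lam * (S - mγ) + 8 * μx * γ * (S - mγ) + 8 * γ ^ 2 * (S - mγ))
          / (2 * μx * lam) := by
      field_simp
      ring
    rw [hco, le_div_iff₀ (by positivity)]
    have A1 : lam * (2 * μx * (f xs y₀ - m₀)) ≤ lam * (γ ^ 2 * D) :=
      mul_le_mul_of_nonneg_left hPLxs hlam.le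
    have A2 : 2 * μx * γ * (lam / 4 * D) ≤ 2 * μx * γ * (S - mγ) :=
      mul_le_mul_of_nonneg_left hDle (by positivity)
    have A3 : 2 * γ ^ 2 * (lam / 4 * D) ≤ 2 * γ ^ 2 * (S - mγ) :=
      mul_le_mul_of_nonneg_left hDle (by positivity)
    have A4 : 2 * μx * lam * (f xs y₀ + γ / 2 * D) = 2 * μx * lam * mγ := by rw [hgxs]
    have A5 : 0 ≤ μx * γ * (S - mγ) := by positivity
    have A6 : 0 ≤ γ ^ 2 * (S - mγ) := by positivity
    linarith [A1, A2, A3, A4, A5, A6]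
  refine ⟨hmain, fun ρ hρ hγρ hlamρ => ?_⟩
  have hco2 : (1 + 4 * γ / lam + 4 * γ ^ 2 / (lam * μx)) * (S - mγ)
      = 9 * (S - mγ) + 16 * ρ / μx * (S - mγ) := by
    rw [hγρ, hlamρ]
    field_simp
    ring
  linarith [hmain, hco2.ge, hco2.le]
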